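/- Let ν ∈ (0,1], let E := diag(ν², 1), let β₀ > 0, and let B ∈ ℝ^{2×2} satisfy xᵀBx ≥ β₀²‖x‖² for all x ∈ ℝ². For α ∈ ℝ define ‖U‖²_{1,α} := ∫₀^∞ e^{2αx}(U'(x)·E U'(x) + U(x)·B U(x)) dx and a(U,V) := ∫₀^∞ (U'(x)·E V'(x) + U(x)·B V(x)) dx. Let 0 < β < β₀ and let U : (0,∞) → ℝ² be continuously differentiable with ‖U‖_{1,β} < ∞. Then the function V(x) := e^{2βx} U(x) satisfies ‖V‖_{1,−β} ≤ 2(1 + β/β₀)·‖U‖_{1,β} and a(U,V) ≥ (1 − β/β₀)·‖U‖²_{1,β}; in particular a(U,V) ≥ ((β₀−β)/(2(β₀+β)))·‖U‖_{1,β}·‖V‖_{1,−β}. -/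

import Mathlib

open Matrix Set MeasureTheory

/-- The diagonal matrix `E = diag(ν², 1)`. -/
noncomputable def Emat (ν : ℝ) : Matrix (Fin 2) (Fin 2) ℝ := !![ν ^ 2, 0; 0, 1]

/-- The squared exponentially weighted norm
`‖W‖²_{1,α} = ∫₀^∞ e^{2αx}(W'·EW' + W·BW) dx` on the half line. -/
noncomputable def wnormSq (ν : ℝ) (B : Matrix (Fin 2) (Fin 2) ℝ) (α : ℝ)
    (W W' : ℝ → Fin 2 → ℝ) : ℝ :=
  ∫ x in Ioi (0:ℝ),
    Real.exp (2 * α * x) * (W' x ⬝ᵥ (Emat ν *ᵥ W' x) + W x ⬝ᵥ (B *ᵥ W x))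

set_option maxHeartbeats 1000000

lemma dotB' (M : Matrix (Fin 2) (Fin 2) ℝ) (v w : Fin 2 → ℝ) :
    v ⬝ᵥ (M *ᵥ w) = v 0 * (M 0 0 * w 0 + M 0 1 * w 1) + v 1 * (M 1 0 * w 0 + M 1 1 * w 1) := by
  simp [Matrix.mulVec, dotProduct, Fin.sum_univ_two]

lemma dotE' (ν : ℝ) (v w : Fin 2 → ℝ) :
    v ⬝ᵥ (Emat ν *ᵥ w) = ν ^ 2 * (v 0 * w 0) + v 1 * w 1 := by
  simp [Emat, Matrix.mulVec, dotProduct, Fin.sum_univ_two]; ring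

lemma contOn_dot' (M : Matrix (Fin 2) (Fin 2) ℝ) (W W' : ℝ → Fin 2 → ℝ) (s : Set ℝ)
    (h : ContinuousOn W s) (h' : ContinuousOn W' s) :
    ContinuousOn (fun x => W' x ⬝ᵥ (M *ᵥ W x)) s := by
  have hW : ∀ i, ContinuousOn (fun x => W x i) s :=
    fun i => (continuous_apply i).comp_continuousOn h
  have hW' : ∀ i, ContinuousOn (fun x => W' x i) s :=
    fun i => (continuous_apply i).comp_continuousOn h'
  simp only [Matrix.mulVec, dotProduct, Fin.sum_univ_two]
  exact ((hW' 0).mul ((continuousOn_const.mul (hW 0)).add (continuousOn_const.mul (hW 1)))).add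
    ((hW' 1).mul ((continuousOn_const.mul (hW 0)).add (continuousOn_const.mul (hW 1))))

lemma ptwiseR' (ν β₀ β q a b a' b' : ℝ) (hν : 0 < ν) (hν1 : ν ≤ 1) (hβ₀ : 0 < β₀)
    (hβpos : 0 < β)
    (hq0 : β₀ ^ 2 * (a * a + b * b) ≤ q) :
    0 ≤ (ν ^ 2 * (a' * a') + b' * b') + q ∧
    (1 - β / β₀) * ((ν ^ 2 * (a' * a') + b' * b') + q) ≤
      (ν ^ 2 * (a' * a') + b' * b') + q + 2 * β * (ν ^ 2 * (a' * a) + b' * b) ∧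
    (ν ^ 2 * (a' * a') + b' * b') + q + 2 * β * (ν ^ 2 * (a' * a) + b' * b) ≤
      (1 + β / β₀) * ((ν ^ 2 * (a' * a') + b' * b') + q) ∧
    0 ≤ 4 * β ^ 2 * (ν ^ 2 * (a * a) + b * b) + 4 * β * (ν ^ 2 * (a' * a) + b' * b) +
        (ν ^ 2 * (a' * a') + b' * b') + q ∧
    4 * β ^ 2 * (ν ^ 2 * (a * a) + b * b) + 4 * β * (ν ^ 2 * (a' * a) + b' * b) +
        (ν ^ 2 * (a' * a') + b' * b') + q ≤
      4 * (1 + β / β₀) ^ 2 * ((ν ^ 2 * (a' * a') + b' * b') + q) := by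
  have hp : (0:ℝ) ≤ ν ^ 2 * (a' * a') + b' * b' := by
    nlinarith [sq_nonneg (ν * a'), sq_nonneg b']
  have hm : (0:ℝ) ≤ ν ^ 2 * (a * a) + b * b := by
    nlinarith [sq_nonneg (ν * a), sq_nonneg b]
  have hν2 : ν ^ 2 ≤ 1 := by nlinarith
  have hmq : β₀ ^ 2 * (ν ^ 2 * (a * a) + b * b) ≤ q := by
    nlinarith [mul_nonneg (mul_nonneg (sq_nonneg β₀) (sub_nonneg.2 hν2)) (mul_self_nonneg a)]
  have hq : 0 ≤ q := le_trans (by positivity) hmq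
  have hcs : (ν ^ 2 * (a' * a) + b' * b) ^ 2 ≤
      (ν ^ 2 * (a' * a') + b' * b') * (ν ^ 2 * (a * a) + b * b) := by
    nlinarith [sq_nonneg (ν * (a' * b - a * b')), sq_nonneg ν]
  have hc2 : β₀ ^ 2 * (ν ^ 2 * (a' * a) + b' * b) ^ 2 ≤ (ν ^ 2 * (a' * a') + b' * b') * q := by
    calc β₀ ^ 2 * (ν ^ 2 * (a' * a) + b' * b) ^ 2
        ≤ β₀ ^ 2 * ((ν ^ 2 * (a' * a') + b' * b') * (ν ^ 2 * (a * a) + b * b)) :=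
          mul_le_mul_of_nonneg_left hcs (sq_nonneg β₀)
      _ = (ν ^ 2 * (a' * a') + b' * b') * (β₀ ^ 2 * (ν ^ 2 * (a * a) + b * b)) := by ring
      _ ≤ (ν ^ 2 * (a' * a') + b' * b') * q := mul_le_mul_of_nonneg_left hmq hp
  have hsq : (2 * β₀ * (ν ^ 2 * (a' * a) + b' * b)) ^ 2 ≤
      ((ν ^ 2 * (a' * a') + b' * b') + q) ^ 2 := by
    nlinarith [sq_nonneg ((ν ^ 2 * (a' * a') + b' * b') - q)]
  have h1 : 2 * β₀ * (ν ^ 2 * (a' * a) + b' * b) ≤ (ν ^ 2 * (a' * a') + b' * b') + q := by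
    nlinarith [hsq, add_nonneg hp hq]
  have h2 : -((ν ^ 2 * (a' * a') + b' * b') + q) ≤ 2 * β₀ * (ν ^ 2 * (a' * a) + b' * b) := by
    nlinarith [hsq, add_nonneg hp hq]
  have ht : (1 - β / β₀) = (β₀ - β) / β₀ := by field_simp
  have ht' : (1 + β / β₀) = (β₀ + β) / β₀ := by field_simp
  refine ⟨by linarith, ?_, ?_, ?_, ?_⟩
  · rw [ht, div_mul_eq_mul_div, div_le_iff₀ hβ₀]
    linarith [mul_le_mul_of_nonneg_left h2 hβpos.le]
  · rw [ht', div_mul_eq_mul_div, le_div_iff₀ hβ₀]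
    linarith [mul_le_mul_of_nonneg_left h1 hβpos.le]
  · nlinarith [sq_nonneg (ν * (2 * β * a + a')), sq_nonneg (2 * β * b + b')]
  · rw [ht', show (4 : ℝ) * ((β₀ + β) / β₀) ^ 2 * ((ν ^ 2 * (a' * a') + b' * b') + q)
        = 4 * (β₀ + β) ^ 2 * ((ν ^ 2 * (a' * a') + b' * b') + q) / β₀ ^ 2 by
      field_simp, le_div_iff₀ (by positivity)]
    linarith [mul_le_mul_of_nonneg_left hmq (by positivity : (0:ℝ) ≤ 4 * β ^ 2),
      mul_le_mul_of_nonneg_left h1 (le_of_lt (mul_pos hβpos hβ₀)),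
      mul_le_mul_of_nonneg_left hmq (by positivity : (0:ℝ) ≤ 4 * β * β₀),
      mul_nonneg (by positivity : (0:ℝ) ≤ 4 * β ^ 2) hp,
      mul_nonneg (by positivity : (0:ℝ) ≤ 8 * β * β₀) (add_nonneg hp hq),
      mul_nonneg (sq_nonneg β₀) (add_nonneg hp hq)]

lemma ptwise' (ν β₀ β : ℝ) (hν : 0 < ν) (hν1 : ν ≤ 1) (hβ₀ : 0 < β₀) (hβpos : 0 < β)
    (B : Matrix (Fin 2) (Fin 2) ℝ)
    (hB : ∀ x : Fin 2 → ℝ, β₀ ^ 2 * (x ⬝ᵥ x) ≤ x ⬝ᵥ (B *ᵥ x))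
    (u u' : Fin 2 → ℝ) :
    0 ≤ u' ⬝ᵥ (Emat ν *ᵥ u') + u ⬝ᵥ (B *ᵥ u) ∧
    (1 - β / β₀) * (u' ⬝ᵥ (Emat ν *ᵥ u') + u ⬝ᵥ (B *ᵥ u)) ≤
      u' ⬝ᵥ (Emat ν *ᵥ u') + u ⬝ᵥ (B *ᵥ u) + 2 * β * (u' ⬝ᵥ (Emat ν *ᵥ u)) ∧
    u' ⬝ᵥ (Emat ν *ᵥ u') + u ⬝ᵥ (B *ᵥ u) + 2 * β * (u' ⬝ᵥ (Emat ν *ᵥ u)) ≤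
      (1 + β / β₀) * (u' ⬝ᵥ (Emat ν *ᵥ u') + u ⬝ᵥ (B *ᵥ u)) ∧
    0 ≤ 4 * β ^ 2 * (u ⬝ᵥ (Emat ν *ᵥ u)) + 4 * β * (u' ⬝ᵥ (Emat ν *ᵥ u)) +
        u' ⬝ᵥ (Emat ν *ᵥ u') + u ⬝ᵥ (B *ᵥ u) ∧
    4 * β ^ 2 * (u ⬝ᵥ (Emat ν *ᵥ u)) + 4 * β * (u' ⬝ᵥ (Emat ν *ᵥ u)) +
        u' ⬝ᵥ (Emat ν *ᵥ u') + u ⬝ᵥ (B *ᵥ u) ≤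
      4 * (1 + β / β₀) ^ 2 * (u' ⬝ᵥ (Emat ν *ᵥ u') + u ⬝ᵥ (B *ᵥ u)) := by
  have hq0 : β₀ ^ 2 * (u 0 * u 0 + u 1 * u 1) ≤ u ⬝ᵥ (B *ᵥ u) := by
    have h := hB u
    rwa [show u ⬝ᵥ u = u 0 * u 0 + u 1 * u 1 from by
      simp [dotProduct, Fin.sum_univ_two]] at h
  simp only [dotE']
  exact ptwiseR' ν β₀ β (u ⬝ᵥ (B *ᵥ u)) (u 0) (u 1) (u' 0) (u' 1) hν hν1 hβ₀ hβpos hq0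

theorem stmt_13 (ν β₀ β : ℝ) (hν : 0 < ν) (hν1 : ν ≤ 1) (hβ₀ : 0 < β₀)
    (hβpos : 0 < β) (hβ : β < β₀)
    (B : Matrix (Fin 2) (Fin 2) ℝ)
    (hB : ∀ x : Fin 2 → ℝ, β₀ ^ 2 * (x ⬝ᵥ x) ≤ x ⬝ᵥ (B *ᵥ x))
    (U U' : ℝ → Fin 2 → ℝ)
    (hU : ∀ x ∈ Ioi (0:ℝ), HasDerivAt U (U' x) x)
    (hU'c : ContinuousOn U' (Ioi 0))
    (hfin : IntegrableOn
      (fun x => Real.exp (2 * β * x) *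
        (U' x ⬝ᵥ (Emat ν *ᵥ U' x) + U x ⬝ᵥ (B *ᵥ U x))) (Ioi 0)) :
    Real.sqrt (wnormSq ν B (-β) (fun x => Real.exp (2 * β * x) • U x)
        (fun x => (2 * β * Real.exp (2 * β * x)) • U x + Real.exp (2 * β * x) • U' x)) ≤
      2 * (1 + β / β₀) * Real.sqrt (wnormSq ν B β U U') ∧
    (1 - β / β₀) * wnormSq ν B β U U' ≤
      (∫ x in Ioi (0:ℝ),
        (U' x ⬝ᵥ (Emat ν *ᵥ
            ((2 * β * Real.exp (2 * β * x)) • U x + Real.exp (2 * β * x) • U' x)) +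
          U x ⬝ᵥ (B *ᵥ (Real.exp (2 * β * x) • U x)))) ∧
    ((β₀ - β) / (2 * (β₀ + β))) * Real.sqrt (wnormSq ν B β U U') *
        Real.sqrt (wnormSq ν B (-β) (fun x => Real.exp (2 * β * x) • U x)
          (fun x => (2 * β * Real.exp (2 * β * x)) • U x + Real.exp (2 * β * x) • U' x)) ≤
      (∫ x in Ioi (0:ℝ),
        (U' x ⬝ᵥ (Emat ν *ᵥ
            ((2 * β * Real.exp (2 * β * x)) • U x + Real.exp (2 * β * x) • U' x)) +
          U x ⬝ᵥ (B *ᵥ (Real.exp (2 * β * x) • U x)))) := by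
  have key := fun x : ℝ => ptwise' ν β₀ β hν hν1 hβ₀ hβpos B hB (U x) (U' x)
  set t := β / β₀ with htdef
  have ht0 : 0 < t := div_pos hβpos hβ₀
  have ht1 : t < 1 := (div_lt_one hβ₀).2 hβ
  set f : ℝ → ℝ := fun x => Real.exp (2 * β * x) *
      (U' x ⬝ᵥ (Emat ν *ᵥ U' x) + U x ⬝ᵥ (B *ᵥ U x)) with hfdef
  set g : ℝ → ℝ := fun x => Real.exp (2 * β * x) *
      (4 * β ^ 2 * (U x ⬝ᵥ (Emat ν *ᵥ U x)) + 4 * β * (U' x ⬝ᵥ (Emat ν *ᵥ U x)) +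
        U' x ⬝ᵥ (Emat ν *ᵥ U' x) + U x ⬝ᵥ (B *ᵥ U x)) with hgdef
  set h : ℝ → ℝ := fun x => Real.exp (2 * β * x) *
      (U' x ⬝ᵥ (Emat ν *ᵥ U' x) + U x ⬝ᵥ (B *ᵥ U x) +
        2 * β * (U' x ⬝ᵥ (Emat ν *ᵥ U x))) with hhdef
  -- continuity of U on Ioi 0
  have hUc : ContinuousOn U (Ioi 0) := fun x hx =>
    ((hU x hx).continuousAt).continuousWithinAt
  have cexp : Continuous fun x : ℝ => Real.exp (2 * β * x) :=
    Real.continuous_exp.comp (by continuity)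
  have cg : ContinuousOn g (Ioi 0) := by
    apply cexp.continuousOn.mul
    exact (((continuousOn_const.mul (contOn_dot' (Emat ν) U U _ hUc hUc)).add
      (continuousOn_const.mul (contOn_dot' (Emat ν) U U' _ hUc hU'c))).add
      (contOn_dot' (Emat ν) U' U' _ hU'c hU'c)).add (contOn_dot' B U U _ hUc hUc)
  have ch : ContinuousOn h (Ioi 0) := by
    apply cexp.continuousOn.mul
    exact ((contOn_dot' (Emat ν) U' U' _ hU'c hU'c).add (contOn_dot' B U U _ hUc hUc)).add
      (continuousOn_const.mul (contOn_dot' (Emat ν) U U' _ hUc hU'c))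
  -- pointwise bounds
  have hf0 : ∀ x, 0 ≤ f x := fun x =>
    mul_nonneg (Real.exp_pos _).le (key x).1
  have hg0 : ∀ x, 0 ≤ g x := fun x =>
    mul_nonneg (Real.exp_pos _).le (by linarith [(key x).2.2.2.1])
  have hgle : ∀ x, g x ≤ 4 * (1 + t) ^ 2 * f x := fun x => by
    have := mul_le_mul_of_nonneg_left (key x).2.2.2.2 (Real.exp_pos (2 * β * x)).le
    simp only [hgdef, hfdef]
    calc Real.exp (2 * β * x) * (4 * β ^ 2 * (U x ⬝ᵥ (Emat ν *ᵥ U x)) +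
          4 * β * (U' x ⬝ᵥ (Emat ν *ᵥ U x)) + U' x ⬝ᵥ (Emat ν *ᵥ U' x) + U x ⬝ᵥ (B *ᵥ U x))
        ≤ Real.exp (2 * β * x) * (4 * (1 + t) ^ 2 *
          (U' x ⬝ᵥ (Emat ν *ᵥ U' x) + U x ⬝ᵥ (B *ᵥ U x))) := this
      _ = 4 * (1 + t) ^ 2 * (Real.exp (2 * β * x) *
          (U' x ⬝ᵥ (Emat ν *ᵥ U' x) + U x ⬝ᵥ (B *ᵥ U x))) := by ring
  have hhlow : ∀ x, (1 - t) * f x ≤ h x := fun x => by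
    have := mul_le_mul_of_nonneg_left (key x).2.1 (Real.exp_pos (2 * β * x)).le
    simp only [hhdef, hfdef]
    calc (1 - t) * (Real.exp (2 * β * x) *
          (U' x ⬝ᵥ (Emat ν *ᵥ U' x) + U x ⬝ᵥ (B *ᵥ U x)))
        = Real.exp (2 * β * x) * ((1 - t) *
          (U' x ⬝ᵥ (Emat ν *ᵥ U' x) + U x ⬝ᵥ (B *ᵥ U x))) := by ring
      _ ≤ _ := this
  have hhup : ∀ x, h x ≤ (1 + t) * f x := fun x => by
    have := mul_le_mul_of_nonneg_left (key x).2.2.1 (Real.exp_pos (2 * β * x)).le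
    simp only [hhdef, hfdef]
    calc Real.exp (2 * β * x) * (U' x ⬝ᵥ (Emat ν *ᵥ U' x) + U x ⬝ᵥ (B *ᵥ U x) +
          2 * β * (U' x ⬝ᵥ (Emat ν *ᵥ U x)))
        ≤ Real.exp (2 * β * x) * ((1 + t) *
          (U' x ⬝ᵥ (Emat ν *ᵥ U' x) + U x ⬝ᵥ (B *ᵥ U x))) := this
      _ = (1 + t) * (Real.exp (2 * β * x) *
          (U' x ⬝ᵥ (Emat ν *ᵥ U' x) + U x ⬝ᵥ (B *ᵥ U x))) := by ring
  have hh0 : ∀ x, 0 ≤ h x := fun x =>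
    le_trans (mul_nonneg (by linarith) (hf0 x)) (hhlow x)
  -- integrability
  have hg_int : IntegrableOn g (Ioi 0) := by
    refine Integrable.mono (hfin.const_mul (4 * (1 + t) ^ 2))
      (cg.aestronglyMeasurable measurableSet_Ioi)
      (Filter.Eventually.of_forall fun x => ?_)
    rw [Real.norm_of_nonneg (hg0 x), Real.norm_of_nonneg
      (mul_nonneg (by positivity) (hf0 x))]
    exact hgle x
  have hh_int : IntegrableOn h (Ioi 0) := by
    refine Integrable.mono (hfin.const_mul (1 + t))
      (ch.aestronglyMeasurable measurableSet_Ioi)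
      (Filter.Eventually.of_forall fun x => ?_)
    rw [Real.norm_of_nonneg (hh0 x), Real.norm_of_nonneg
      (mul_nonneg (by linarith) (hf0 x))]
    exact hhup x
  -- identification of the three integrals
  have hWf : wnormSq ν B β U U' = ∫ x in Ioi (0:ℝ), f x := rfl
  have hWG : wnormSq ν B (-β) (fun x => Real.exp (2 * β * x) • U x)
      (fun x => (2 * β * Real.exp (2 * β * x)) • U x + Real.exp (2 * β * x) • U' x) =
      ∫ x in Ioi (0:ℝ), g x := by
    unfold wnormSq
    refine integral_congr_ae (Filter.Eventually.of_forall fun x => ?_)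
    show Real.exp (2 * (-β) * x) *
      ((((2 * β * Real.exp (2 * β * x)) • U x + Real.exp (2 * β * x) • U' x) ⬝ᵥ
          (Emat ν *ᵥ ((2 * β * Real.exp (2 * β * x)) • U x + Real.exp (2 * β * x) • U' x))) +
        (Real.exp (2 * β * x) • U x) ⬝ᵥ (B *ᵥ (Real.exp (2 * β * x) • U x))) = g x
    have hE2 : Real.exp (2 * (-β) * x) = (Real.exp (2 * β * x))⁻¹ := by
      rw [← Real.exp_neg]; ring_nf
    rw [hE2]
    simp only [hgdef, dotB', Emat, Matrix.of_apply, Matrix.cons_val', Matrix.cons_val_zero, Matrix.cons_val_one,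
      Matrix.head_cons, Matrix.empty_val', Matrix.cons_val_fin_one, Matrix.head_fin_const,
      Pi.add_apply, Pi.smul_apply, smul_eq_mul]
    field_simp
    ring
  have hA : (∫ x in Ioi (0:ℝ),
      (U' x ⬝ᵥ (Emat ν *ᵥ
          ((2 * β * Real.exp (2 * β * x)) • U x + Real.exp (2 * β * x) • U' x)) +
        U x ⬝ᵥ (B *ᵥ (Real.exp (2 * β * x) • U x)))) = ∫ x in Ioi (0:ℝ), h x := by
    refine integral_congr_ae (Filter.Eventually.of_forall fun x => ?_)
    show _ = h x
    simp only [hhdef, dotB', Emat, Matrix.cons_val', Matrix.cons_val_zero, Matrix.cons_val_one,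
      Matrix.head_cons, Matrix.empty_val', Matrix.cons_val_fin_one, Matrix.head_fin_const,
      Pi.add_apply, Pi.smul_apply, smul_eq_mul]
    ring
  have hIf0 : 0 ≤ ∫ x in Ioi (0:ℝ), f x :=
    setIntegral_nonneg measurableSet_Ioi fun x _ => hf0 x
  -- first claim
  have claim1 : Real.sqrt (wnormSq ν B (-β) (fun x => Real.exp (2 * β * x) • U x)
      (fun x => (2 * β * Real.exp (2 * β * x)) • U x + Real.exp (2 * β * x) • U' x)) ≤
      2 * (1 + t) * Real.sqrt (wnormSq ν B β U U') := by
    rw [hWG, hWf]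
    have hle : (∫ x in Ioi (0:ℝ), g x) ≤ 4 * (1 + t) ^ 2 * ∫ x in Ioi (0:ℝ), f x := by
      calc (∫ x in Ioi (0:ℝ), g x)
          ≤ ∫ x in Ioi (0:ℝ), 4 * (1 + t) ^ 2 * f x :=
            integral_mono hg_int (hfin.const_mul _) fun x => hgle x
        _ = 4 * (1 + t) ^ 2 * ∫ x in Ioi (0:ℝ), f x := integral_const_mul _ _
    calc Real.sqrt (∫ x in Ioi (0:ℝ), g x)
        ≤ Real.sqrt (4 * (1 + t) ^ 2 * ∫ x in Ioi (0:ℝ), f x) := Real.sqrt_le_sqrt hle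
      _ = 2 * (1 + t) * Real.sqrt (∫ x in Ioi (0:ℝ), f x) := by
          rw [show 4 * (1 + t) ^ 2 = (2 * (1 + t)) ^ 2 by ring,
            Real.sqrt_mul (sq_nonneg _), Real.sqrt_sq (by linarith)]
  -- second claim
  have claim2 : (1 - t) * wnormSq ν B β U U' ≤
      (∫ x in Ioi (0:ℝ),
        (U' x ⬝ᵥ (Emat ν *ᵥ
            ((2 * β * Real.exp (2 * β * x)) • U x + Real.exp (2 * β * x) • U' x)) +
          U x ⬝ᵥ (B *ᵥ (Real.exp (2 * β * x) • U x)))) := by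
    rw [hA, hWf]
    calc (1 - t) * ∫ x in Ioi (0:ℝ), f x
        = ∫ x in Ioi (0:ℝ), (1 - t) * f x := (integral_const_mul _ _).symm
      _ ≤ ∫ x in Ioi (0:ℝ), h x :=
          integral_mono (hfin.const_mul _) hh_int fun x => hhlow x
  refine ⟨claim1, claim2, ?_⟩
  -- third claim
  have hcoef : (β₀ - β) / (2 * (β₀ + β)) * (2 * (1 + t)) = 1 - t := by
    rw [htdef]; field_simp
  have hcnn : 0 ≤ (β₀ - β) / (2 * (β₀ + β)) := div_nonneg (by linarith) (by linarith)
  have hSnn : 0 ≤ Real.sqrt (wnormSq ν B β U U') := Real.sqrt_nonneg _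
  calc ((β₀ - β) / (2 * (β₀ + β))) * Real.sqrt (wnormSq ν B β U U') *
        Real.sqrt (wnormSq ν B (-β) (fun x => Real.exp (2 * β * x) • U x)
          (fun x => (2 * β * Real.exp (2 * β * x)) • U x + Real.exp (2 * β * x) • U' x))
      ≤ ((β₀ - β) / (2 * (β₀ + β))) * Real.sqrt (wnormSq ν B β U U') *
        (2 * (1 + t) * Real.sqrt (wnormSq ν B β U U')) :=
        mul_le_mul_of_nonneg_left claim1 (mul_nonneg hcnn hSnn)
    _ = ((β₀ - β) / (2 * (β₀ + β)) * (2 * (1 + t))) *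
        (Real.sqrt (wnormSq ν B β U U') * Real.sqrt (wnormSq ν B β U U')) := by ring
    _ = (1 - t) * wnormSq ν B β U U' := by
        rw [hcoef, Real.mul_self_sqrt (by rw [hWf]; exact hIf0)]
    _ ≤ _ := claim2
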